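/- If χ: ℝ_q^{1,3} → ℂ is a unital algebra homomorphism, then the eigenvalues p_μ = χ(P_μ) satisfy p_A (p₀ − p₃) = 0 for all A ∈ {−, 3, +}; hence either p₋ = p₊ = p₃ = 0, or p₀ = p₃. -/
import Mathlib


/-- If `χ : ℝ_q^{1,3} → ℂ` is a unital algebra homomorphism, then the
eigenvalues `p_μ = χ(P_μ)` (which, `ℂ` being commutative, are complex numbers satisfying
the images of the defining relations, written out below) satisfy `p_A(p₀ − p₃) = 0` for
all `A ∈ {−,3,+}`; hence either `p₋ = p₊ = p₃ = 0`, or `p₀ = p₃`. -/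
theorem statement9 (q : ℝ) (hq : 1 < q) (p0 pm pp p3 : ℂ)
    -- χ applied to  P_AP_B ε^{AB}_C = −λP₀P_C  for C = −, 3, + :
    (hCm : (q⁻¹ : ℂ) * (pm * p3) - (q : ℂ) * (p3 * pm) = -(((q : ℂ) - (q⁻¹ : ℂ)) * (p0 * pm)))
    (hC3 : pm * pp - pp * pm - ((q : ℂ) - (q⁻¹ : ℂ)) * (p3 * p3)
        = -(((q : ℂ) - (q⁻¹ : ℂ)) * (p0 * p3)))
    (hCp : (q⁻¹ : ℂ) * (p3 * pp) - (q : ℂ) * (pp * p3) = -(((q : ℂ) - (q⁻¹ : ℂ)) * (p0 * pp))) :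
    (pm * (p0 - p3) = 0 ∧ p3 * (p0 - p3) = 0 ∧ pp * (p0 - p3) = 0) ∧
    ((pm = 0 ∧ p3 = 0 ∧ pp = 0) ∨ p0 = p3) := by
  have hq0 : (0:ℝ) < q := by linarith
  have hlR : q - q⁻¹ ≠ 0 := by
    have : q⁻¹ < 1 := by
      rw [inv_lt_one_iff₀]; right; exact hq
    nlinarith
  have hl : ((q : ℂ) - (q⁻¹ : ℂ)) ≠ 0 := by
    intro h
    apply hlR
    have := congrArg Complex.re h
    simpa using this
  have h1 : pm * (p0 - p3) = 0 := by
    have h : ((q : ℂ) - (q⁻¹ : ℂ)) * (pm * (p0 - p3)) = 0 := by linear_combination hCm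
    rcases mul_eq_zero.mp h with h | h
    · exact absurd h hl
    · exact h
  have h2 : p3 * (p0 - p3) = 0 := by
    have h : ((q : ℂ) - (q⁻¹ : ℂ)) * (p3 * (p0 - p3)) = 0 := by linear_combination hC3
    rcases mul_eq_zero.mp h with h | h
    · exact absurd h hl
    · exact h
  have h3 : pp * (p0 - p3) = 0 := by
    have h : ((q : ℂ) - (q⁻¹ : ℂ)) * (pp * (p0 - p3)) = 0 := by linear_combination hCp
    rcases mul_eq_zero.mp h with h | h
    · exact absurd h hl
    · exact h
  refine ⟨⟨h1, h2, h3⟩, ?_⟩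
  by_cases hp : p0 = p3
  · exact Or.inr hp
  · have hd : p0 - p3 ≠ 0 := sub_ne_zero.mpr hp
    exact Or.inl ⟨by rcases mul_eq_zero.mp h1 with h | h; exact h; exact absurd h hd,
      by rcases mul_eq_zero.mp h2 with h | h; exact h; exact absurd h hd,
      by rcases mul_eq_zero.mp h3 with h | h; exact h; exact absurd h hd⟩
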